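/- Let μ > 0, let r = (r₀, r₁) ∈ Δ_m × Δ_n, and let (x*, y*) be a saddle point of the regularized objective f_r on Δ_m × Δ_n. Then for every Nash equilibrium (x̄, ȳ) of the original game, ½‖x̄ − x*‖₂² + ½‖ȳ − y*‖₂² ≤ ( ½‖x̄ − r₀‖₂² + ½‖ȳ − r₁‖₂² ) − ( ½‖x* − r₀‖₂² + ½‖y* − r₁‖₂² ). -/

import Mathlib

open Finset

/-- Squared Euclidean norm of a vector in `ℝ^d`. -/
noncomputable def sqnorm {d : ℕ} (v : Fin d → ℝ) : ℝ := ∑ i, (v i) ^ 2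

/-- Euclidean norm `‖·‖₂` of a vector in `ℝ^d`. -/
noncomputable def enorm2 {d : ℕ} (v : Fin d → ℝ) : ℝ := Real.sqrt (sqnorm v)

/-- Euclidean inner product on `ℝ^d`. -/
noncomputable def ip {d : ℕ} (u v : Fin d → ℝ) : ℝ := ∑ i, u i * v i

/-- The max-player's payoff `⟨x, A y⟩` in the two-player zero-sum game with payoff matrix `A`. -/
noncomputable def pay {m n : ℕ} (A : Matrix (Fin m) (Fin n) ℝ)
    (x : Fin m → ℝ) (y : Fin n → ℝ) : ℝ := ip x (A.mulVec y)

/-- `(x, y)` is a Nash equilibrium of the zero-sum game with payoff matrix `A`: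
`⟨x, A y'⟩ ≤ ⟨x, A y⟩ ≤ ⟨x', A y⟩` for all `x' ∈ Δ_m`, `y' ∈ Δ_n`. -/
def IsNE {m n : ℕ} (A : Matrix (Fin m) (Fin n) ℝ)
    (x : Fin m → ℝ) (y : Fin n → ℝ) : Prop :=
  x ∈ stdSimplex ℝ (Fin m) ∧ y ∈ stdSimplex ℝ (Fin n) ∧
  ∀ x' ∈ stdSimplex ℝ (Fin m), ∀ y' ∈ stdSimplex ℝ (Fin n),
    pay A x y' ≤ pay A x y ∧ pay A x y ≤ pay A x' y

/-- The regularized objective `f_r(x,y) = ⟨x, A y⟩ + (μ/2)‖x − r₀‖₂² − (μ/2)‖y − r₁‖₂²`. -/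
noncomputable def freg {m n : ℕ} (A : Matrix (Fin m) (Fin n) ℝ) (μ : ℝ)
    (r₀ : Fin m → ℝ) (r₁ : Fin n → ℝ) (x : Fin m → ℝ) (y : Fin n → ℝ) : ℝ :=
  pay A x y + (μ / 2) * sqnorm (x - r₀) - (μ / 2) * sqnorm (y - r₁)

/-- `(xs, ys)` is a saddle point of `f_r` on `Δ_m × Δ_n`. -/
def IsSaddle {m n : ℕ} (A : Matrix (Fin m) (Fin n) ℝ) (μ : ℝ)
    (r₀ : Fin m → ℝ) (r₁ : Fin n → ℝ) (xs : Fin m → ℝ) (ys : Fin n → ℝ) : Prop :=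
  xs ∈ stdSimplex ℝ (Fin m) ∧ ys ∈ stdSimplex ℝ (Fin n) ∧
  ∀ x ∈ stdSimplex ℝ (Fin m), ∀ y ∈ stdSimplex ℝ (Fin n),
    freg A μ r₀ r₁ xs y ≤ freg A μ r₀ r₁ xs ys ∧
    freg A μ r₀ r₁ xs ys ≤ freg A μ r₀ r₁ x ys

lemma sqnorm_nonneg {d : ℕ} (v : Fin d → ℝ) : 0 ≤ sqnorm v :=
  Finset.sum_nonneg fun i _ => sq_nonneg _

lemma ip_add_smul {d : ℕ} (u w v : Fin d → ℝ) (t : ℝ) :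
    ip (u + t • w) v = ip u v + t * ip w v := by
  simp only [ip, Pi.add_apply, Pi.smul_apply, smul_eq_mul, Finset.mul_sum]
  rw [← Finset.sum_add_distrib]
  exact Finset.sum_congr rfl fun i _ => by ring

lemma ip_neg_right {d : ℕ} (u v : Fin d → ℝ) : ip u (-v) = -ip u v := by
  simp only [ip, Pi.neg_apply, mul_neg, Finset.sum_neg_distrib]

lemma sqnorm_add_smul {d : ℕ} (u w : Fin d → ℝ) (t : ℝ) :
    sqnorm (u + t • w) = sqnorm u + 2 * t * ip u w + t ^ 2 * sqnorm w := by
  simp only [sqnorm, ip, Pi.add_apply, Pi.smul_apply, smul_eq_mul, Finset.mul_sum]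
  rw [← Finset.sum_add_distrib, ← Finset.sum_add_distrib]
  exact Finset.sum_congr rfl fun i _ => by ring

lemma pay_transpose {m n : ℕ} (A : Matrix (Fin m) (Fin n) ℝ)
    (x : Fin m → ℝ) (y : Fin n → ℝ) :
    pay A x y = ip y (A.transpose.mulVec x) := by
  simp only [pay, ip, Matrix.mulVec, dotProduct, Matrix.transpose_apply,
    Finset.mul_sum]
  rw [Finset.sum_comm]
  exact Finset.sum_congr rfl fun j _ => Finset.sum_congr rfl fun i _ => by ring

/-- Strong convexity: a minimizer of `x ↦ ⟨x,v⟩ + (μ/2)‖x−r‖²` over the simplex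
satisfies the quadratic growth bound. -/
lemma strong_min {d : ℕ} (μ : ℝ) (hμ : 0 < μ) (v r xs : Fin d → ℝ)
    (hxs : xs ∈ stdSimplex ℝ (Fin d))
    (hmin : ∀ x ∈ stdSimplex ℝ (Fin d),
      ip xs v + (μ / 2) * sqnorm (xs - r) ≤ ip x v + (μ / 2) * sqnorm (x - r)) :
    ∀ x ∈ stdSimplex ℝ (Fin d),
      ip xs v + (μ / 2) * sqnorm (xs - r) + (μ / 2) * sqnorm (x - xs) ≤
        ip x v + (μ / 2) * sqnorm (x - r) := by
  intro x hx
  set c : ℝ := ip (x - xs) v + μ * ip (xs - r) (x - xs) with hc_def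
  set dd : ℝ := (μ / 2) * sqnorm (x - xs) with hdd_def
  have hdd : 0 ≤ dd := mul_nonneg (by positivity) (sqnorm_nonneg _)
  have hkey : ∀ t : ℝ,
      ip (xs + t • (x - xs)) v + (μ / 2) * sqnorm ((xs + t • (x - xs)) - r) =
        (ip xs v + (μ / 2) * sqnorm (xs - r)) + (t * c + t ^ 2 * dd) := by
    intro t
    have h1 : (xs + t • (x - xs)) - r = (xs - r) + t • (x - xs) := by
      funext i; simp [Pi.sub_apply]; ring
    rw [ip_add_smul, h1, sqnorm_add_smul, hc_def, hdd_def]; ring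
  have hmem : ∀ t : ℝ, 0 ≤ t → t ≤ 1 → xs + t • (x - xs) ∈ stdSimplex ℝ (Fin d) := by
    intro t ht0 ht1
    have h2 : xs + t • (x - xs) = (1 - t) • xs + t • x := by
      funext i; simp [Pi.sub_apply]; ring
    rw [h2]
    exact (convex_stdSimplex ℝ (Fin d)) hxs hx (by linarith) ht0 (by ring)
  have hstep : ∀ t : ℝ, 0 < t → t ≤ 1 → 0 ≤ c + t * dd := by
    intro t ht0 ht1
    have h := hmin _ (hmem t (le_of_lt ht0) ht1)
    rw [hkey t] at h
    nlinarith
  have hc : 0 ≤ c := by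
    by_contra hcon
    push_neg at hcon
    rcases eq_or_lt_of_le hdd with h0 | h0
    · have := hstep 1 one_pos le_rfl
      rw [← h0] at this; linarith
    · have ht0 : 0 < min 1 (-c / (2 * dd)) :=
        lt_min one_pos (div_pos (by linarith) (by linarith))
      have h := hstep _ ht0 (min_le_left _ _)
      have h2 : min 1 (-c / (2 * dd)) * dd ≤ (-c / (2 * dd)) * dd :=
        mul_le_mul_of_nonneg_right (min_le_right _ _) hdd
      have h3 : (-c / (2 * dd)) * dd = -c / 2 := by
        field_simp
      rw [h3] at h2
      linarith
  have hone := hkey 1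
  have hx1 : xs + (1 : ℝ) • (x - xs) = x := by
    funext i; simp [Pi.sub_apply]
  rw [hx1] at hone
  rw [hone]; nlinarith

/-- if `(x*, y*)` is a saddle point of the regularized objective `f_r`, then for
every Nash equilibrium `(x̄, ȳ)` of the original game,
`½‖x̄ − x*‖² + ½‖ȳ − y*‖² ≤ (½‖x̄ − r₀‖² + ½‖ȳ − r₁‖²) − (½‖x* − r₀‖² + ½‖y* − r₁‖²)`. -/
theorem saddle_point_decreases_bregman_to_NE
    (m n : ℕ) (hm : 1 ≤ m) (hn : 1 ≤ n) (A : Matrix (Fin m) (Fin n) ℝ)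
    (μ : ℝ) (hμ : 0 < μ)
    (r₀ : Fin m → ℝ) (r₁ : Fin n → ℝ)
    (hr₀ : r₀ ∈ stdSimplex ℝ (Fin m)) (hr₁ : r₁ ∈ stdSimplex ℝ (Fin n))
    (xs : Fin m → ℝ) (ys : Fin n → ℝ) (hsaddle : IsSaddle A μ r₀ r₁ xs ys)
    (xb : Fin m → ℝ) (yb : Fin n → ℝ) (hNE : IsNE A xb yb) :
    (1 / 2) * sqnorm (xb - xs) + (1 / 2) * sqnorm (yb - ys) ≤
      ((1 / 2) * sqnorm (xb - r₀) + (1 / 2) * sqnorm (yb - r₁)) -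
      ((1 / 2) * sqnorm (xs - r₀) + (1 / 2) * sqnorm (ys - r₁)) := by
  obtain ⟨hxs, hys, hsad⟩ := hsaddle
  obtain ⟨hxb, hyb, hne⟩ := hNE
  -- x-side strong convexity
  have Hx := strong_min μ hμ (A.mulVec ys) r₀ xs hxs
    (fun x hx => by
      have h := (hsad x hx ys hys).2
      simp only [freg, pay] at h
      linarith) xb hxb
  -- y-side strong convexity (minimize the negated objective)
  have Hy := strong_min μ hμ (-(A.transpose.mulVec xs)) r₁ ys hys
    (fun y hy => by
      have h := (hsad xs hxs y hy).1
      simp only [freg] at h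
      rw [pay_transpose A xs y, pay_transpose A xs ys] at h
      rw [ip_neg_right, ip_neg_right]
      linarith) yb hyb
  rw [ip_neg_right, ip_neg_right] at Hy
  -- Nash equilibrium inequalities
  have hne1 := (hne xs hxs ys hys).1  -- pay A xb ys ≤ pay A xb yb
  have hne2 := (hne xs hxs ys hys).2  -- pay A xb yb ≤ pay A xs yb
  have hpx : ip xs (A.mulVec ys) = pay A xs ys := rfl
  have hpx' : ip xb (A.mulVec ys) = pay A xb ys := rfl
  have hpy : ip ys (A.transpose.mulVec xs) = pay A xs ys := (pay_transpose A xs ys).symm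
  have hpy' : ip yb (A.transpose.mulVec xs) = pay A xs yb := (pay_transpose A xs yb).symm
  rw [hpx, hpx'] at Hx
  rw [hpy, hpy'] at Hy
  -- combine
  have hmain : (μ / 2) * (sqnorm (xb - xs) + sqnorm (yb - ys) +
      sqnorm (xs - r₀) + sqnorm (ys - r₁)) ≤
      (μ / 2) * (sqnorm (xb - r₀) + sqnorm (yb - r₁)) := by
    have e1 : (μ / 2) * (sqnorm (xb - xs) + sqnorm (yb - ys) +
        sqnorm (xs - r₀) + sqnorm (ys - r₁)) =
        (μ / 2) * sqnorm (xb - xs) + (μ / 2) * sqnorm (yb - ys) +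
        (μ / 2) * sqnorm (xs - r₀) + (μ / 2) * sqnorm (ys - r₁) := by ring
    have e2 : (μ / 2) * (sqnorm (xb - r₀) + sqnorm (yb - r₁)) =
        (μ / 2) * sqnorm (xb - r₀) + (μ / 2) * sqnorm (yb - r₁) := by ring
    rw [e1, e2]
    linarith
  have hfin := (mul_le_mul_iff_right₀ (half_pos hμ)).mp hmain
  linarith
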